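/- For each fixed τ > 1/e, the function x_τ strictly decreases from the value 1 at t = 0 to the value 0 at its first positive zero ϱ(τ) (in particular x_τ has a positive zero, so ϱ(τ) is finite, and x_τ is strictly decreasing on [0, ϱ(τ)]). Moreover, the map τ ↦ ϱ(τ) is continuous on (1/e, ∞), strictly decreasing on (1/e, 1], and satisfies ϱ(τ) = 1 for all τ ≥ 1. -/

import Mathlib

open Real MeasureTheory Filter Set

noncomputable section

/-- `x` is the solution of `x'(t) = -x(t-τ)` with `x ≡ 1` on `(-∞,0]`:
`x(t) = 1 - ∫_0^t x(s-τ) ds` for `t ≥ 0`. -/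
def IsXSol (τ : ℝ) (x : ℝ → ℝ) : Prop :=
  Continuous x ∧ (∀ t ≤ (0:ℝ), x t = 1) ∧
    ∀ t ≥ (0:ℝ), x t = 1 - ∫ s in (0:ℝ)..t, x (s - τ)

/-- The first positive root of a function. -/
noncomputable def firstRoot (x : ℝ → ℝ) : ℝ := sInf {t : ℝ | 0 < t ∧ x t = 0}

/-- `ψ` is the solution of `ψ'(t) = max{x_τ(ϱ(τ)+t-τ), ψ(t)}` on `[0,τ]`,
`ψ'(t) = ψ(t)` on `[τ,∞)`, `ψ(0) = 0`. -/
def IsPsiSol (τ ρ : ℝ) (xτ ψ : ℝ → ℝ) : Prop :=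
  ContinuousOn ψ (Ici (0:ℝ)) ∧ ψ 0 = 0 ∧
    (∀ t ∈ Icc (0:ℝ) τ, ψ t = ∫ s in (0:ℝ)..t, max (xτ (ρ + s - τ)) (ψ s)) ∧
    (∀ t ≥ τ, ψ t = ψ τ + ∫ s in τ..t, ψ s)

/-- A (continuous, integrated-form) solution of the delay equation
`x'(t) = p(t) x(τ̄(t))` on `[t₀,∞)`. -/
def IsDelaySolution (p τd : ℝ → ℝ) (t₀ : ℝ) (x : ℝ → ℝ) : Prop :=
  Continuous x ∧ ∀ t ≥ t₀, x t = x t₀ + ∫ s in t₀..t, p s * x (τd s)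

/-- `x` is `α`-oscillating: eventually every interval on which `x` has no zero
has length at most `α`. -/
def AlphaOscillating (α : ℝ) (x : ℝ → ℝ) : Prop :=
  ∃ T : ℝ, ∀ a b : ℝ, T ≤ a → a < b → (∀ t ∈ Ioo a b, x t ≠ 0) → b - a ≤ α

/-- `x` is oscillatory: it has arbitrarily large zeros. -/
def Oscillatory (x : ℝ → ℝ) : Prop := ∀ T : ℝ, ∃ t ≥ T, x t = 0



namespace XWork

variable {τ : ℝ} {x : ℝ → ℝ}

lemma contD (hx : IsXSol τ x) : Continuous fun s => x (s - τ) :=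
  hx.1.comp (continuous_sub_right τ)

lemma intInt (hx : IsXSol τ x) (a b : ℝ) :
    IntervalIntegrable (fun s => x (s - τ)) volume a b :=
  (contD hx).intervalIntegrable a b

/-- On `[0, τ]`, `x t = 1 - t`. -/
lemma eq_one_sub (hx : IsXSol τ x) {t : ℝ} (h0 : 0 ≤ t) (h1 : t ≤ τ) : x t = 1 - t := by
  have h := hx.2.2 t h0
  have : (∫ s in (0:ℝ)..t, x (s - τ)) = ∫ s in (0:ℝ)..t, (1:ℝ) := by
    apply intervalIntegral.integral_congr
    intro s hs
    rw [uIcc_of_le h0] at hs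
    exact hx.2.1 _ (by linarith [hs.1, hs.2])
  rw [this] at h
  simpa using h

lemma hasDerivAt (hx : IsXSol τ x) {t : ℝ} (ht : 0 < t) :
    HasDerivAt x (-(x (t - τ))) t := by
  have key : HasDerivAt (fun r => 1 - ∫ s in (0:ℝ)..r, x (s - τ)) (-(x (t - τ))) t := by
    have h1 : HasDerivAt (fun r => ∫ s in (0:ℝ)..r, x (s - τ)) (x (t - τ)) t :=
      intervalIntegral.integral_hasDerivAt_right (intInt hx 0 t)
        ((contD hx).stronglyMeasurableAtFilter _ _) (contD hx).continuousAt
    simpa using h1.const_sub 1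
  apply key.congr_of_eventuallyEq
  filter_upwards [Ioi_mem_nhds ht] with r hr
  exact hx.2.2 r (le_of_lt hr)

lemma sub_eq (hx : IsXSol τ x) {a b : ℝ} (ha : 0 ≤ a) (hb : 0 ≤ b) :
    x a - x b = ∫ s in a..b, x (s - τ) := by
  rw [hx.2.2 a ha, hx.2.2 b hb]
  have := intervalIntegral.integral_interval_sub_left (intInt hx 0 b) (intInt hx 0 a)
  rw [← this]; ring

/-- If `x (t-τ) ≥ 0` on `(0,b)` then `x` is antitone on `[0,b]`. -/
lemma antitoneOn (hx : IsXSol τ x) {b : ℝ}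
    (h : ∀ t ∈ Ioo (0:ℝ) b, 0 ≤ x (t - τ)) : AntitoneOn x (Icc 0 b) := by
  apply antitoneOn_of_deriv_nonpos (convex_Icc 0 b) hx.1.continuousOn
  · intro t ht
    rw [interior_Icc] at ht
    exact (hasDerivAt hx ht.1).differentiableAt.differentiableWithinAt
  · intro t ht
    rw [interior_Icc] at ht
    rw [(hasDerivAt hx ht.1).deriv]
    linarith [h t ht]

lemma strictAntiOn (hx : IsXSol τ x) {b : ℝ}
    (h : ∀ t ∈ Ioo (0:ℝ) b, 0 < x (t - τ)) : StrictAntiOn x (Icc 0 b) := by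
  apply strictAntiOn_of_deriv_neg (convex_Icc 0 b) hx.1.continuousOn
  intro t ht
  rw [interior_Icc] at ht
  rw [(hasDerivAt hx ht.1).deriv]
  linarith [h t ht]

/-- Glue: if antitone on `[0,b]` then `x v ≤ x u` whenever `u ≤ v ≤ b`. -/
lemma le_of_le (hx : IsXSol τ x) {b : ℝ} (hab : AntitoneOn x (Icc 0 b))
    {u v : ℝ} (huv : u ≤ v) (hv : v ≤ b) : x v ≤ x u := by
  rcases le_or_gt v 0 with h | h
  · rw [hx.2.1 v h, hx.2.1 u (le_trans huv h)]
  rcases le_or_gt u 0 with h' | h'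
  · rw [hx.2.1 u h']
    have h0 : x 0 = 1 := by simpa using hx.2.2 0 le_rfl
    have := hab ⟨le_refl 0, le_trans h.le hv⟩ ⟨h.le, hv⟩ h.le
    rwa [h0] at this
  · exact hab ⟨h'.le, le_trans huv hv⟩ ⟨le_trans h'.le huv, hv⟩ huv


def Aseq (τ : ℝ) : ℕ → ℝ
  | 0 => 1
  | (n+1) => Real.exp (τ * Aseq τ n)



variable {τ : ℝ} {x : ℝ → ℝ}

lemma Aseq_pos (τ : ℝ) : ∀ n, 0 < Aseq τ n
  | 0 => one_pos
  | (n+1) => Real.exp_pos _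

lemma Aseq_growth (hτ : 1 < Real.exp 1 * τ) : ∀ n, (Real.exp 1 * τ) ^ n ≤ Aseq τ n := by
  intro n
  induction n with
  | zero => simp [Aseq]
  | succ n ih =>
    have hτ0 : 0 < τ := by nlinarith [Real.exp_pos 1]
    have hAp := Aseq_pos τ n
    have h1 : Real.exp 1 * (τ * Aseq τ n) ≤ Real.exp (τ * Aseq τ n) := by
      have h2 := Real.add_one_le_exp (τ * Aseq τ n - 1)
      have e2 : Real.exp (τ * Aseq τ n - 1) * Real.exp 1 = Real.exp (τ * Aseq τ n) := by
        rw [← Real.exp_add]; ring_nf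
      nlinarith [Real.exp_pos 1, Real.exp_pos (τ * Aseq τ n - 1)]
    calc (Real.exp 1 * τ) ^ (n+1) = (Real.exp 1 * τ) ^ n * (Real.exp 1 * τ) := by ring
    _ ≤ Aseq τ n * (Real.exp 1 * τ) := by
        apply mul_le_mul_of_nonneg_right ih (by positivity)
    _ = Real.exp 1 * (τ * Aseq τ n) := by ring
    _ ≤ Real.exp (τ * Aseq τ n) := h1
    _ = Aseq τ (n+1) := rfl

/-- Existence of a positive root when `τ > 1/e`. -/
lemma exists_root (hτe : 1 / Real.exp 1 < τ) (hx : IsXSol τ x) :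
    ∃ t > (0:ℝ), x t = 0 := by
  by_contra hcon
  push_neg at hcon
  have τpos : 0 < τ := lt_trans (by positivity) hτe
  have x0 : x 0 = 1 := by simpa using hx.2.2 0 le_rfl
  -- positivity everywhere
  have pos : ∀ t, 0 < x t := by
    intro t
    rcases le_or_gt t 0 with h | h
    · rw [hx.2.1 t h]; norm_num
    rcases lt_trichotomy (x t) 0 with hlt | heq | hgt
    · exfalso
      have : (0:ℝ) ∈ Ioo (x t) (x 0) := by rw [x0]; exact ⟨hlt, one_pos⟩
      obtain ⟨s, hs, hxs⟩ := intermediate_value_Ioo' h.le hx.1.continuousOn this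
      exact hcon s hs.1 hxs
    · exact absurd heq (hcon t h)
    · exact hgt
  -- global antitonicity
  have anti : ∀ u v : ℝ, u ≤ v → x v ≤ x u := by
    intro u v huv
    exact le_of_le hx (antitoneOn hx (fun t _ => (pos _).le)) huv le_rfl
  -- one-step integral estimate
  have step : ∀ t, 0 ≤ t → ∀ h', 0 ≤ h' → h' * x (t + h' - τ) ≤ x t := by
    intro t ht h' hh'
    have e := sub_eq hx ht (by linarith : (0:ℝ) ≤ t + h')
    have lb : (∫ s in t..(t+h'), x (t + h' - τ)) ≤ ∫ s in t..(t+h'), x (s - τ) := by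
      apply intervalIntegral.integral_mono_on (by linarith)
        (intervalIntegrable_const) (intInt hx _ _)
      intro s hs
      exact anti _ _ (by linarith [hs.2])
    rw [intervalIntegral.integral_const] at lb
    have : h' * x (t + h' - τ) ≤ x t - x (t + h') := by
      rw [e]
      calc h' * x (t + h' - τ) = (t + h' - t) • x (t + h' - τ) := by
            rw [smul_eq_mul]; ring_nf
      _ ≤ _ := lb
    linarith [pos (t + h')]
  -- ratio estimate
  have ratio : ∀ n : ℕ, ∀ t, (n : ℝ) * τ ≤ t → Aseq τ n * x t ≤ x (t - τ) := by
    intro n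
    induction n with
    | zero =>
      intro t _
      simpa [Aseq] using anti (t - τ) t (by linarith)
    | succ n ih =>
      intro t ht
      have hnτ : (0:ℝ) ≤ (n:ℝ) * τ := by positivity
      have htτ : (n:ℝ) * τ ≤ t - τ := by push_cast at ht ⊢; linarith
      set A := Aseq τ n with hA
      have hApos := Aseq_pos τ n
      -- the function s ↦ x s * exp (A s) is antitone on [t-τ, t]
      have ganti : AntitoneOn (fun s => x s * Real.exp (A * s)) (Icc (t-τ) t) := by
        apply antitoneOn_of_deriv_nonpos (convex_Icc _ _)
          (hx.1.mul (by fun_prop : Continuous fun s => Real.exp (A * s))).continuousOn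
        · intro s hs
          rw [interior_Icc] at hs
          have hs0 : 0 < s := lt_of_le_of_lt (le_trans hnτ htτ) hs.1
          have hd := (hasDerivAt hx hs0).mul (((hasDerivAt_id s).const_mul A).exp)
          simp only [id_eq, mul_one] at hd
          exact hd.differentiableAt.differentiableWithinAt
        · intro s hs
          rw [interior_Icc] at hs
          have hs0 : 0 < s := lt_of_le_of_lt (le_trans hnτ htτ) hs.1
          have hd := (hasDerivAt hx hs0).mul (((hasDerivAt_id s).const_mul A).exp)
          simp only [id_eq, mul_one] at hd
          rw [hd.deriv]
          have hihs := ih s (le_trans htτ hs.1.le)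
          nlinarith [Real.exp_pos (A * s), pos s, pos (s - τ)]
      have gineq := ganti (by constructor <;> linarith : t - τ ∈ Icc (t-τ) t)
        (by constructor <;> linarith : t ∈ Icc (t-τ) t) (by linarith)
      simp only at gineq
      -- multiply by exp (-(A * (t - τ)))
      have key : x t * Real.exp (τ * A) ≤ x (t - τ) := by
        have h3 := mul_le_mul_of_nonneg_right gineq (Real.exp_pos (-(A * (t - τ)))).le
        have eL : x t * Real.exp (A * t) * Real.exp (-(A * (t - τ)))
            = x t * Real.exp (τ * A) := by
          rw [mul_assoc, ← Real.exp_add, show A * t + -(A * (t - τ)) = τ * A from by ring]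
        have eR : x (t - τ) * Real.exp (A * (t - τ)) * Real.exp (-(A * (t - τ)))
            = x (t - τ) := by
          rw [mul_assoc, ← Real.exp_add, show A * (t - τ) + -(A * (t - τ)) = 0 from by ring,
            Real.exp_zero, mul_one]
        rw [eL, eR] at h3
        exact h3
      calc Aseq τ (n+1) * x t = x t * Real.exp (τ * A) := by rw [hA]; show Real.exp (τ * Aseq τ n) * x t = _; ring
      _ ≤ x (t - τ) := key
  -- quarter estimate
  have quarter : ∀ t, τ/2 ≤ t → τ^2 * x (t - τ) ≤ 4 * x t := by
    intro t ht
    have s1 := step t (by linarith) (τ/2) (by linarith)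
    have s2 := step (t - τ/2) (by linarith) (τ/2) (by linarith)
    have e1 : t + τ/2 - τ = t - τ/2 := by ring
    have e2 : t - τ/2 + τ/2 - τ = t - τ := by ring
    rw [e1] at s1; rw [e2] at s2
    nlinarith [pos (t - τ), pos (t - τ/2), pos t]
  -- conclude
  have h1τ : 1 < Real.exp 1 * τ := by
    rwa [div_lt_iff₀' (Real.exp_pos 1)] at hτe
  obtain ⟨n, hn⟩ := pow_unbounded_of_one_lt (4 / τ^2) h1τ
  have hA4 : 4 < Aseq τ n * τ^2 := by
    have := lt_of_lt_of_le hn (Aseq_growth h1τ n)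
    rw [div_lt_iff₀ (by positivity)] at this
    linarith
  set t := (n : ℝ) * τ + τ with htdef
  have hr := ratio n t (by simp [htdef]; linarith)
  have hq := quarter t (by simp only [htdef]; nlinarith [Nat.cast_nonneg (α := ℝ) n])
  nlinarith [pos t, pos (t - τ), Aseq_pos τ n, mul_pos (pos (t-τ)) (Aseq_pos τ n)]


variable {τ : ℝ} {x : ℝ → ℝ}

lemma lb_mem (hx : IsXSol τ x) (hτ : 0 < τ) {t : ℝ} (h0 : 0 < t) (hz : x t = 0) :
    min τ 1 ≤ t := by
  by_contra h
  push_neg at h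
  have h1 : t ≤ τ := le_of_lt (lt_of_lt_of_le h (min_le_left _ _))
  have h2 : t < 1 := lt_of_lt_of_le h (min_le_right _ _)
  rw [eq_one_sub hx h0.le h1] at hz; linarith

lemma bddBelow_roots : BddBelow {t : ℝ | 0 < t ∧ x t = 0} :=
  ⟨0, fun t ht => ht.1.le⟩

lemma firstRoot_mem (hτe : 1 / Real.exp 1 < τ) (hx : IsXSol τ x) :
    0 < firstRoot x ∧ x (firstRoot x) = 0 ∧ min τ 1 ≤ firstRoot x := by
  have hτ : 0 < τ := lt_trans (by positivity) hτe
  obtain ⟨t0, ht0, hz0⟩ := exists_root hτe hx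
  have hSeq : {t : ℝ | 0 < t ∧ x t = 0} = Ici (min τ 1) ∩ x ⁻¹' {0} := by
    ext t
    constructor
    · exact fun ht => ⟨lb_mem hx hτ ht.1 ht.2, ht.2⟩
    · exact fun ht => ⟨lt_of_lt_of_le (lt_min hτ one_pos) ht.1, ht.2⟩
  have hclosed : IsClosed {t : ℝ | 0 < t ∧ x t = 0} := by
    rw [hSeq]; exact isClosed_Ici.inter (isClosed_singleton.preimage hx.1)
  have hmem := hclosed.csInf_mem ⟨t0, ht0, hz0⟩ bddBelow_roots
  exact ⟨hmem.1, hmem.2, lb_mem hx hτ hmem.1 hmem.2⟩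

lemma pos_of_lt_firstRoot (hτe : 1 / Real.exp 1 < τ) (hx : IsXSol τ x)
    {t : ℝ} (ht : t < firstRoot x) : 0 < x t := by
  rcases le_or_gt t 0 with h | h
  · rw [hx.2.1 t h]; norm_num
  have x0 : x 0 = 1 := by simpa using hx.2.2 0 le_rfl
  rcases lt_trichotomy (x t) 0 with hlt | heq | hgt
  · exfalso
    have : (0:ℝ) ∈ Ioo (x t) (x 0) := by rw [x0]; exact ⟨hlt, one_pos⟩
    obtain ⟨s, hs, hxs⟩ := intermediate_value_Ioo' h.le hx.1.continuousOn this
    have := csInf_le bddBelow_roots (⟨hs.1, hxs⟩ : s ∈ {t : ℝ | 0 < t ∧ x t = 0})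
    have : firstRoot x ≤ s := this
    linarith [hs.2]
  · exfalso
    have := csInf_le bddBelow_roots (⟨h, heq⟩ : t ∈ {t : ℝ | 0 < t ∧ x t = 0})
    have : firstRoot x ≤ t := this
    linarith
  · exact hgt

lemma strictAntiOn_upto (hτe : 1 / Real.exp 1 < τ) (hx : IsXSol τ x) :
    StrictAntiOn x (Icc 0 (firstRoot x + τ)) := by
  apply strictAntiOn hx
  intro t ht
  exact pos_of_lt_firstRoot hτe hx (by linarith [ht.2])

lemma antitoneOn_upto (hτe : 1 / Real.exp 1 < τ) (hx : IsXSol τ x) :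
    AntitoneOn x (Icc 0 (firstRoot x)) := by
  have hτ : 0 < τ := lt_trans (by positivity) hτe
  apply antitoneOn hx
  intro t ht
  exact (pos_of_lt_firstRoot hτe hx (by linarith [ht.2] : t - τ < firstRoot x)).le

lemma le_of_le_rho (hτe : 1 / Real.exp 1 < τ) (hx : IsXSol τ x)
    {u v : ℝ} (huv : u ≤ v) (hv : v ≤ firstRoot x) : x v ≤ x u :=
  le_of_le hx (antitoneOn_upto hτe hx) huv hv

lemma neg_after (hτe : 1 / Real.exp 1 < τ) (hx : IsXSol τ x)
    {ε : ℝ} (h0 : 0 < ε) (h1 : ε ≤ τ) : x (firstRoot x + ε) < 0 := by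
  have hm := firstRoot_mem hτe hx
  have := strictAntiOn_upto hτe hx (⟨hm.1.le, by linarith⟩ : firstRoot x ∈ Icc 0 (firstRoot x + τ))
    (⟨by linarith, by linarith⟩ : firstRoot x + ε ∈ Icc 0 (firstRoot x + τ)) (by linarith)
  rw [hm.2.1] at this
  exact this

lemma firstRoot_eq_one (hτe : 1 / Real.exp 1 < τ) (hx : IsXSol τ x) (h1 : 1 ≤ τ) :
    firstRoot x = 1 := by
  have hτ : 0 < τ := lt_trans (by positivity) hτe
  have hmem : (1:ℝ) ∈ {t : ℝ | 0 < t ∧ x t = 0} := by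
    refine ⟨one_pos, ?_⟩
    rw [eq_one_sub hx zero_le_one h1]; ring
  apply le_antisymm (csInf_le bddBelow_roots hmem)
  apply le_csInf ⟨1, hmem⟩
  intro t ht
  have := lb_mem hx hτ ht.1 ht.2
  rwa [min_eq_right h1] at this

lemma firstRoot_gt_one (hτe : 1 / Real.exp 1 < τ) (hx : IsXSol τ x) (h1 : τ < 1) :
    1 < firstRoot x := by
  have hτ : 0 < τ := lt_trans (by positivity) hτe
  set ρ := firstRoot x with hρ
  obtain ⟨hρ0, hρz, hρlb⟩ := firstRoot_mem hτe hx
  rw [min_eq_left h1.le] at hρlb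
  have hρτ : τ < ρ := by
    rcases eq_or_lt_of_le hρlb with h | h
    · exfalso
      rw [← h, eq_one_sub hx hτ.le le_rfl] at hρz
      linarith
    · exact h
  by_contra hcon
  push_neg at hcon
  set c := ρ - τ with hc
  have hc0 : 0 < c := by simp [hc]; linarith
  -- split the integral
  have hsplit : (∫ s in (0:ℝ)..ρ, x (s - τ)) = τ + ∫ u in (0:ℝ)..c, x u := by
    rw [← intervalIntegral.integral_add_adjacent_intervals (intInt hx 0 τ) (intInt hx τ ρ)]
    congr 1
    · have : (∫ s in (0:ℝ)..τ, x (s - τ)) = ∫ s in (0:ℝ)..τ, (1:ℝ) := by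
        apply intervalIntegral.integral_congr
        intro s hs
        rw [uIcc_of_le hτ.le] at hs
        exact hx.2.1 _ (by linarith [hs.2])
      rw [this]; simp
    · rw [intervalIntegral.integral_comp_sub_right _ τ]
      simp [hc]
  -- the upper bound
  have hub : (∫ u in (0:ℝ)..c, x u) < c := by
    have hmono : (∫ u in (0:ℝ)..c, x u) ≤ ∫ u in (0:ℝ)..c, (1 - min u τ) := by
      apply intervalIntegral.integral_mono_on hc0.le (hx.1.intervalIntegrable _ _)
        ((continuous_const.sub (continuous_id'.min continuous_const)).intervalIntegrable _ _)
      intro u hu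
      show x u ≤ 1 - min u τ
      rcases le_or_gt u τ with h | h
      · rw [eq_one_sub hx hu.1 h, min_eq_left h]
      · have : x u ≤ x τ := le_of_le_rho hτe hx h.le (by linarith [hu.2])
        rw [eq_one_sub hx hτ.le le_rfl] at this
        rw [min_eq_right h.le]
        exact this
    have hposint : 0 < ∫ u in (0:ℝ)..c, min u τ := by
      apply intervalIntegral.intervalIntegral_pos_of_pos_on
        ((continuous_id'.min continuous_const).intervalIntegrable _ _) _ hc0
      intro u hu
      exact lt_min hu.1 hτ
    have : (∫ u in (0:ℝ)..c, (1 - min u τ))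
        = c - ∫ u in (0:ℝ)..c, min u τ := by
      rw [intervalIntegral.integral_sub (intervalIntegrable_const)
        ((continuous_id'.min continuous_const).intervalIntegrable _ _)]
      simp
    linarith
  have := hx.2.2 ρ hρ0.le
  rw [hρz, hsplit] at this
  have hρ1 : ρ ≤ 1 := hcon
  simp [hc] at hub
  linarith

def Kb (T : ℝ) : ℕ → ℝ
  | 0 => 1
  | (n+1) => 1 + T * Kb T n

def Db (M T : ℝ) : ℕ → ℝ
  | 0 => 0
  | (n+1) => T * (M + Db M T n)



variable {τ τ₁ τ₂ : ℝ} {x x₁ x₂ : ℝ → ℝ}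

lemma Kb_one_le {T : ℝ} (hT : 0 ≤ T) : ∀ n, 1 ≤ Kb T n
  | 0 => le_refl 1
  | (n+1) => by
      have := Kb_one_le hT n
      show (1:ℝ) ≤ 1 + T * Kb T n
      nlinarith

lemma Db_nonneg {M T : ℝ} (hM : 0 ≤ M) (hT : 0 ≤ T) : ∀ n, 0 ≤ Db M T n
  | 0 => le_refl 0
  | (n+1) => by
      have := Db_nonneg hM hT n
      show (0:ℝ) ≤ T * (M + Db M T n)
      positivity

lemma abs_bound (hx : IsXSol τ x) (hτ : 0 < τ) {T : ℝ} (hT : 0 ≤ T) :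
    ∀ n : ℕ, ∀ t, t ≤ n * τ → t ≤ T → |x t| ≤ Kb T n := by
  intro n
  induction n with
  | zero =>
    intro t ht _
    simp only [Nat.cast_zero, zero_mul] at ht
    rw [hx.2.1 t ht]
    simp [Kb]
  | succ n ih =>
    intro t ht hT'
    rcases le_or_gt t 0 with h | h
    · rw [hx.2.1 t h]
      simpa using Kb_one_le hT (n+1)
    · have heq := hx.2.2 t h.le
      have hbd : ∀ s ∈ Set.Icc (0:ℝ) t, |x (s - τ)| ≤ Kb T n := by
        intro s hs
        apply ih
        · push_cast at ht ⊢; linarith [hs.2]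
        · linarith [hs.2]
      calc |x t| = |1 - ∫ s in (0:ℝ)..t, x (s - τ)| := by rw [heq]
      _ ≤ 1 + |∫ s in (0:ℝ)..t, x (s - τ)| := by
          have := abs_sub (1:ℝ) (∫ s in (0:ℝ)..t, x (s - τ))
          calc |1 - ∫ s in (0:ℝ)..t, x (s - τ)| ≤ |(1:ℝ)| + |∫ s in (0:ℝ)..t, x (s - τ)| :=
            abs_sub _ _
          _ = 1 + |∫ s in (0:ℝ)..t, x (s - τ)| := by rw [abs_one]
      _ ≤ 1 + ∫ s in (0:ℝ)..t, |x (s - τ)| := by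
          linarith [intervalIntegral.abs_integral_le_integral_abs (μ := volume)
            (f := fun s => x (s - τ)) (a := 0) (b := t) h.le]
      _ ≤ 1 + ∫ s in (0:ℝ)..t, Kb T n := by
          have : (∫ s in (0:ℝ)..t, |x (s - τ)|) ≤ ∫ s in (0:ℝ)..t, Kb T n :=
            intervalIntegral.integral_mono_on h.le ((contD hx).abs.intervalIntegrable _ _)
              intervalIntegrable_const hbd
          linarith
      _ = 1 + t * Kb T n := by rw [intervalIntegral.integral_const, smul_eq_mul]; ring_nf
      _ ≤ 1 + T * Kb T n := by
          have h1 := Kb_one_le hT n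
          nlinarith
      _ = Kb T (n+1) := rfl

lemma lipschitz (hx : IsXSol τ x) (hτ : 0 < τ) {T M : ℝ} (hM0 : 0 ≤ M)
    (hM : ∀ t, t ≤ T → |x t| ≤ M) :
    ∀ u v, u ≤ v → v ≤ T → |x v - x u| ≤ M * (v - u) := by
  have main : ∀ u v, 0 ≤ u → u ≤ v → v ≤ T → |x v - x u| ≤ M * (v - u) := by
    intro u v hu huv hv
    have e := sub_eq hx hu (le_trans hu huv)
    have : x v - x u = -∫ s in u..v, x (s - τ) := by rw [← e]; ring
    rw [this, abs_neg]
    calc |∫ s in u..v, x (s - τ)| ≤ ∫ s in u..v, |x (s - τ)| :=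
      intervalIntegral.abs_integral_le_integral_abs (μ := volume) huv
    _ ≤ ∫ s in u..v, M := by
        apply intervalIntegral.integral_mono_on huv ((contD hx).abs.intervalIntegrable _ _)
          intervalIntegrable_const
        intro s hs
        exact hM _ (by linarith [hs.2])
    _ = M * (v - u) := by rw [intervalIntegral.integral_const, smul_eq_mul]; ring
  intro u v huv hv
  rcases le_or_gt v 0 with h | h
  · rw [hx.2.1 v h, hx.2.1 u (le_trans huv h)]
    simp
    nlinarith
  rcases le_or_gt u 0 with h' | h'
  · have h0 : x u = x 0 := by
      rw [hx.2.1 u h']; symm; simpa using hx.2.2 0 le_rfl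
    rw [h0]
    calc |x v - x 0| ≤ M * (v - 0) := main 0 v le_rfl h.le hv
    _ ≤ M * (v - u) := by nlinarith
  · exact main u v h'.le huv hv

lemma diff_est (hx1 : IsXSol τ₁ x₁) (hx2 : IsXSol τ₂ x₂) (hτ1 : 0 < τ₁) (hτ12 : τ₁ ≤ τ₂)
    {T M : ℝ} (hT : 0 ≤ T) (hM0 : 0 ≤ M) (hM : ∀ t, t ≤ T → |x₂ t| ≤ M) :
    ∀ n : ℕ, ∀ t, t ≤ n * τ₁ → t ≤ T → |x₁ t - x₂ t| ≤ Db M T n * (τ₂ - τ₁) := by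
  intro n
  induction n with
  | zero =>
    intro t ht _
    simp only [Nat.cast_zero, zero_mul] at ht
    rw [hx1.2.1 t ht, hx2.2.1 t ht]
    simp [Db]
  | succ n ih =>
    intro t ht hT'
    rcases le_or_gt t 0 with h | h
    · rw [hx1.2.1 t h, hx2.2.1 t h]
      simp only [sub_self, abs_zero]
      have := Db_nonneg hM0 hT (n+1)
      nlinarith
    · have e1 := hx1.2.2 t h.le
      have e2 := hx2.2.2 t h.le
      have key : x₁ t - x₂ t = ∫ s in (0:ℝ)..t, (x₂ (s - τ₂) - x₁ (s - τ₁)) := by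
        rw [e1, e2, intervalIntegral.integral_sub (intInt hx2 0 t) (intInt hx1 0 t)]
        ring
      have hbd : ∀ s ∈ Set.Icc (0:ℝ) t, |x₂ (s - τ₂) - x₁ (s - τ₁)| ≤
          (M + Db M T n) * (τ₂ - τ₁) := by
        intro s hs
        have l1 : |x₂ (s - τ₁) - x₂ (s - τ₂)| ≤ M * ((s - τ₁) - (s - τ₂)) :=
          lipschitz hx2 (lt_of_lt_of_le hτ1 hτ12) hM0 hM (s - τ₂) (s - τ₁)
            (by linarith) (by linarith [hs.2])
        have l2 : |x₁ (s - τ₁) - x₂ (s - τ₁)| ≤ Db M T n * (τ₂ - τ₁) := by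
          apply ih
          · push_cast at ht ⊢; linarith [hs.2]
          · linarith [hs.2]
        calc |x₂ (s - τ₂) - x₁ (s - τ₁)|
            = |(x₂ (s - τ₂) - x₂ (s - τ₁)) - (x₁ (s - τ₁) - x₂ (s - τ₁))| := by ring_nf
        _ ≤ |x₂ (s - τ₂) - x₂ (s - τ₁)| + |x₁ (s - τ₁) - x₂ (s - τ₁)| := abs_sub _ _
        _ ≤ M * ((s - τ₁) - (s - τ₂)) + Db M T n * (τ₂ - τ₁) := by
            rw [abs_sub_comm] at l1
            linarith
        _ = (M + Db M T n) * (τ₂ - τ₁) := by ring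
      calc |x₁ t - x₂ t| = |∫ s in (0:ℝ)..t, (x₂ (s - τ₂) - x₁ (s - τ₁))| := by rw [key]
      _ ≤ ∫ s in (0:ℝ)..t, |x₂ (s - τ₂) - x₁ (s - τ₁)| :=
          intervalIntegral.abs_integral_le_integral_abs (μ := volume) h.le
      _ ≤ ∫ s in (0:ℝ)..t, (M + Db M T n) * (τ₂ - τ₁) := by
          apply intervalIntegral.integral_mono_on h.le
            (((contD hx2).sub (contD hx1)).abs.intervalIntegrable _ _)
            intervalIntegrable_const hbd
      _ = t * ((M + Db M T n) * (τ₂ - τ₁)) := by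
          rw [intervalIntegral.integral_const, smul_eq_mul]; ring_nf
      _ ≤ T * ((M + Db M T n) * (τ₂ - τ₁)) := by
          have := Db_nonneg hM0 hT n
          exact mul_le_mul_of_nonneg_right hT' (by nlinarith)
      _ = Db M T (n+1) * (τ₂ - τ₁) := by show _ = T * (M + Db M T n) * _; ring



lemma firstRoot_continuousAt (X : ℝ → ℝ → ℝ) (hX : ∀ τ > 1 / Real.exp 1, IsXSol τ (X τ))
    {τ₀ : ℝ} (hτ₀ : 1 / Real.exp 1 < τ₀) :
    ContinuousAt (fun τ => firstRoot (X τ)) τ₀ := by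
  have hepos : (0:ℝ) < 1 / Real.exp 1 := by positivity
  have hτ₀pos : 0 < τ₀ := lt_trans hepos hτ₀
  set x₀ := X τ₀ with hx₀def
  have hx₀ : IsXSol τ₀ x₀ := hX τ₀ hτ₀
  set ρ₀ := firstRoot x₀ with hρ₀def
  obtain ⟨hρ₀pos, hρ₀z, _⟩ := firstRoot_mem hτ₀ hx₀
  rw [Metric.continuousAt_iff]
  intro ε hε
  set ε' := min (ε/2) (min (τ₀/2) (ρ₀/2)) with hε'def
  have hε'pos : 0 < ε' := by
    apply lt_min (by linarith) (lt_min (by linarith) (by linarith))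
  have hε'1 : ε' ≤ ε/2 := min_le_left _ _
  have hε'2 : ε' ≤ τ₀/2 := le_trans (min_le_right _ _) (min_le_left _ _)
  have hε'3 : ε' ≤ ρ₀/2 := le_trans (min_le_right _ _) (min_le_right _ _)
  -- minimum of x₀ on [0, ρ₀ - ε']
  obtain ⟨z, hz, hzmin⟩ := isCompact_Icc.exists_isMinOn
    (nonempty_Icc.mpr (by linarith : (0:ℝ) ≤ ρ₀ - ε')) hx₀.1.continuousOn
  set m := x₀ z with hmdef
  have hmpos : 0 < m :=
    pos_of_lt_firstRoot hτ₀ hx₀ (by rw [← hρ₀def]; linarith [hz.2] : z < firstRoot x₀)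
  set v := -(x₀ (ρ₀ + ε')) with hvdef
  have hvpos : 0 < v := by
    have h := neg_after hτ₀ hx₀ hε'pos (by linarith : ε' ≤ τ₀)
    rw [← hρ₀def] at h
    rw [hvdef]; linarith
  set η := min m v with hηdef
  have hηpos : 0 < η := lt_min hmpos hvpos
  -- uniform quantities
  set τmin := (1 / Real.exp 1 + τ₀) / 2 with hτmindef
  have hτmin1 : 1 / Real.exp 1 < τmin := by rw [hτmindef]; linarith
  have hτmin2 : τmin < τ₀ := by rw [hτmindef]; linarith
  have hτminpos : 0 < τmin := lt_trans hepos hτmin1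
  set r₀ := τ₀ - τmin with hr₀def
  have hr₀pos : 0 < r₀ := by rw [hr₀def]; linarith
  set T := ρ₀ + ε' with hTdef
  have hT : 0 ≤ T := by rw [hTdef]; linarith
  obtain ⟨n, hn⟩ : ∃ n : ℕ, T ≤ n * τmin := by
    obtain ⟨n, hn⟩ := exists_nat_ge (T / τmin)
    exact ⟨n, by rw [div_le_iff₀ hτminpos] at hn; linarith⟩
  set M := Kb T n with hMdef
  have hM1 : (1:ℝ) ≤ M := Kb_one_le hT n
  set D := Db M T n with hDdef
  have hD0 : 0 ≤ D := Db_nonneg (by linarith) hT n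
  refine ⟨min r₀ (η / (D + 1)), lt_min hr₀pos (by positivity), ?_⟩
  intro τ hdist
  rw [Real.dist_eq] at hdist ⊢
  have hd1 : |τ - τ₀| < r₀ := lt_of_lt_of_le hdist (min_le_left _ _)
  have hd2 : |τ - τ₀| < η / (D + 1) := lt_of_lt_of_le hdist (min_le_right _ _)
  have hτgt : τmin < τ := by
    rcases abs_lt.mp hd1 with ⟨h1, _⟩
    rw [hr₀def] at h1; linarith
  have hτe : 1 / Real.exp 1 < τ := lt_trans hτmin1 hτgt
  have hτpos : 0 < τ := lt_trans hepos hτe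
  have hxτ : IsXSol τ (X τ) := hX τ hτe
  have hnτ : T ≤ (n:ℝ) * τ :=
    le_trans hn (mul_le_mul_of_nonneg_left hτgt.le (Nat.cast_nonneg n))
  have hnτ₀ : T ≤ (n:ℝ) * τ₀ :=
    le_trans hn (mul_le_mul_of_nonneg_left hτmin2.le (Nat.cast_nonneg n))
  -- the uniform difference estimate
  have key : ∀ t, 0 ≤ t → t ≤ T → |X τ t - x₀ t| < η := by
    intro t ht0 htT
    have hest : |X τ t - x₀ t| ≤ D * |τ - τ₀| := by
      rcases le_total τ τ₀ with hle | hle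
      · have hMb : ∀ s, s ≤ T → |x₀ s| ≤ M := by
          intro s hs
          exact abs_bound hx₀ hτ₀pos hT n s (le_trans hs hnτ₀) hs
        have := diff_est hxτ hx₀ hτpos hle hT (by linarith) hMb n t
          (le_trans htT hnτ) htT
        calc |X τ t - x₀ t| ≤ D * (τ₀ - τ) := this
        _ = D * |τ - τ₀| := by rw [abs_sub_comm, abs_of_nonneg (by linarith)]
      · have hMb : ∀ s, s ≤ T → |X τ s| ≤ M := by
          intro s hs
          exact abs_bound hxτ hτpos hT n s (le_trans hs hnτ) hs
        have := diff_est hx₀ hxτ hτ₀pos hle hT (by linarith) hMb n t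
          (le_trans htT hnτ₀) htT
        calc |X τ t - x₀ t| = |x₀ t - X τ t| := abs_sub_comm _ _
        _ ≤ D * (τ - τ₀) := this
        _ = D * |τ - τ₀| := by rw [abs_of_nonneg (by linarith)]
    calc |X τ t - x₀ t| ≤ D * |τ - τ₀| := hest
    _ ≤ D * (η / (D + 1)) := by
        apply mul_le_mul_of_nonneg_left hd2.le hD0
    _ < η := by
        have hD1 : (0:ℝ) < D + 1 := by linarith
        have hq : 0 < η / (D + 1) := by positivity
        have heq2 : η / (D + 1) * (D + 1) = η := div_mul_cancel₀ _ (ne_of_gt hD1)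
        nlinarith
  -- upper bound on the new first root
  have hub : X τ T < 0 := by
    have h1 := key T hT le_rfl
    have h2 : x₀ T = -v := by rw [hvdef, hTdef]; ring
    rcases abs_lt.mp h1 with ⟨_, h3⟩
    have : η ≤ v := min_le_right _ _
    linarith
  have hXτ0 : X τ 0 = 1 := by simpa using hxτ.2.2 0 le_rfl
  obtain ⟨s, hs, hxs⟩ := intermediate_value_Ioo' hT hxτ.1.continuousOn
    (by rw [hXτ0]; exact ⟨hub, one_pos⟩ : (0:ℝ) ∈ Ioo (X τ T) (X τ 0))
  have hmemS : s ∈ {t : ℝ | 0 < t ∧ X τ t = 0} := ⟨hs.1, hxs⟩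
  have hubρ : firstRoot (X τ) ≤ s := csInf_le bddBelow_roots hmemS
  -- lower bound
  have hlbρ : ρ₀ - ε' ≤ firstRoot (X τ) := by
    apply le_csInf ⟨s, hmemS⟩
    intro t ht
    by_contra hcon
    push_neg at hcon
    have ht0 : 0 ≤ t := ht.1.le
    have htT : t ≤ T := by rw [hTdef]; linarith
    have h1 := key t ht0 htT
    have h2 : m ≤ x₀ t := hzmin ⟨ht0, hcon.le⟩
    rcases abs_lt.mp h1 with ⟨h3, _⟩
    have : η ≤ m := min_le_left _ _
    rw [ht.2] at h3
    linarith
  have : |firstRoot (X τ) - ρ₀| ≤ ε' := by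
    rw [abs_le]
    constructor
    · linarith
    · have : firstRoot (X τ) ≤ s := hubρ
      have : s < T := hs.2
      rw [hTdef] at this
      linarith
  linarith

/-- Fubini for the triangle `0 ≤ σ ≤ v ≤ T`. -/
lemma triangle_swap (f B : ℝ → ℝ) (hf : Continuous f) (hB : Continuous B)
    {T : ℝ} (hT : 0 ≤ T) :
    (∫ v in (0:ℝ)..T, ∫ σ in (0:ℝ)..v, f (v - σ) * B σ)
      = ∫ σ in (0:ℝ)..T, (∫ u in (0:ℝ)..(T - σ), f u) * B σ := by
  obtain ⟨Cf, hCf⟩ : ∃ C : ℝ, ∀ r ∈ Icc (-T) T, |f r| ≤ C := by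
    obtain ⟨C, hC⟩ := isCompact_Icc.exists_bound_of_continuousOn
      (hf.continuousOn : ContinuousOn f (Icc (-T) T))
    exact ⟨C, fun r hr => hC r hr⟩
  obtain ⟨CB, hCB⟩ : ∃ C : ℝ, ∀ r ∈ Icc (-T) T, |B r| ≤ C := by
    obtain ⟨C, hC⟩ := isCompact_Icc.exists_bound_of_continuousOn
      (hB.continuousOn : ContinuousOn B (Icc (-T) T))
    exact ⟨C, fun r hr => hC r hr⟩
  have hCf0 : 0 ≤ Cf := le_trans (abs_nonneg _) (hCf 0 (by constructor <;> linarith))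
  have hCB0 : 0 ≤ CB := le_trans (abs_nonneg _) (hCB 0 (by constructor <;> linarith))
  set C := Cf * CB with hCdef
  have hC0 : 0 ≤ C := mul_nonneg hCf0 hCB0
  set G : ℝ → ℝ → ℝ := fun v σ => (Ioc (0:ℝ) v).indicator (fun σ => f (v - σ) * B σ) σ
    with hGdef
  have hSm : MeasurableSet ((Ioc (0:ℝ) T) ×ˢ (Ioc (0:ℝ) T)) :=
    measurableSet_Ioc.prod measurableSet_Ioc
  have hGmeas : AEStronglyMeasurable (Function.uncurry G)
      ((volume.restrict (Ioc (0:ℝ) T)).prod volume) := by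
    have hA : MeasurableSet {p : ℝ × ℝ | p.2 ∈ Ioc 0 p.1} := by
      have h1 : MeasurableSet {p : ℝ × ℝ | (0:ℝ) < p.2} :=
        measurableSet_lt measurable_const measurable_snd
      have h2 : MeasurableSet {p : ℝ × ℝ | p.2 ≤ p.1} :=
        measurableSet_le measurable_snd measurable_fst
      exact (h1.inter h2 : MeasurableSet _)
    have heq : Function.uncurry G
        = {p : ℝ × ℝ | p.2 ∈ Ioc 0 p.1}.indicator (fun p => f (p.1 - p.2) * B p.2) := by
      funext p
      simp only [Function.uncurry, hGdef, Set.indicator_apply, Set.mem_setOf_eq]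
    rw [heq]
    exact (((hf.comp (continuous_fst.sub continuous_snd)).mul
      (hB.comp continuous_snd)).stronglyMeasurable.indicator hA).aestronglyMeasurable
  have hGint : Integrable (Function.uncurry G)
      ((volume.restrict (Ioc (0:ℝ) T)).prod volume) := by
    apply Integrable.mono' (g := fun p : ℝ × ℝ =>
      ((Ioc (0:ℝ) T) ×ˢ (Ioc (0:ℝ) T)).indicator (fun _ => C) p) _ hGmeas
    · -- a.e. bound
      rw [Measure.restrict_prod_eq_prod_univ,
        ae_restrict_iff' (measurableSet_Ioc.prod MeasurableSet.univ)]
      apply ae_of_all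
      rintro ⟨v, σ⟩ hp
      simp only [mem_prod, mem_Ioc, mem_univ, and_true] at hp
      rcases em (σ ∈ Ioc 0 v) with h | h
      · have hσT : σ ∈ Ioc (0:ℝ) T := ⟨h.1, le_trans h.2 hp.2⟩
        have he : Function.uncurry G (v, σ) = f (v - σ) * B σ := by
          simp only [Function.uncurry, hGdef, Set.indicator_of_mem h]
        rw [he, Set.indicator_of_mem (by exact ⟨⟨hp.1, hp.2⟩, hσT⟩), Real.norm_eq_abs, abs_mul]
        apply mul_le_mul (hCf _ ⟨by linarith [h.2, hσT.1.le], by linarith [hp.2, h.1.le]⟩)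
          (hCB _ ⟨by linarith [hσT.1.le], hσT.2⟩) (abs_nonneg _) hCf0
      · have he : Function.uncurry G (v, σ) = 0 := by
          simp only [Function.uncurry, hGdef, Set.indicator_of_notMem h]
        rw [he, norm_zero]
        exact Set.indicator_nonneg (fun _ _ => hC0) _
    · -- integrability of the bound
      rw [Measure.restrict_prod_eq_prod_univ, integrable_indicator_iff hSm]
      apply (integrableOn_const_iff (by simp)).mpr
      right
      calc ((volume.prod volume).restrict (Ioc (0:ℝ) T ×ˢ univ))
            (Ioc (0:ℝ) T ×ˢ Ioc (0:ℝ) T)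
          ≤ (volume.prod volume) (Ioc (0:ℝ) T ×ˢ Ioc (0:ℝ) T) := by
            rw [Measure.restrict_apply hSm]
            exact measure_mono inter_subset_left
      _ < ⊤ := by
          rw [Measure.prod_prod, Real.volume_Ioc]
          exact ENNReal.mul_lt_top ENNReal.ofReal_lt_top ENNReal.ofReal_lt_top
  -- step 1 : write LHS as a double integral of the kernel G
  have step1 : (∫ v in (0:ℝ)..T, ∫ σ in (0:ℝ)..v, f (v - σ) * B σ)
      = ∫ v in Ioc (0:ℝ) T, (∫ σ, G v σ) := by
    rw [intervalIntegral.integral_of_le hT]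
    apply setIntegral_congr_fun measurableSet_Ioc
    intro v hv
    show (∫ σ in (0:ℝ)..v, f (v - σ) * B σ) = ∫ σ, G v σ
    rw [intervalIntegral.integral_of_le hv.1.le, ← integral_indicator measurableSet_Ioc]
  -- step 2 : Fubini
  have step2 : (∫ v in Ioc (0:ℝ) T, (∫ σ, G v σ))
      = ∫ σ, (∫ v in Ioc (0:ℝ) T, G v σ) := integral_integral_swap hGint
  -- step 3 : compute the inner integral pointwise
  have step3 : ∀ σ : ℝ, (∫ v in Ioc (0:ℝ) T, G v σ)
      = (Ioc (0:ℝ) T).indicator (fun σ => (∫ u in (0:ℝ)..(T - σ), f u) * B σ) σ := by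
    intro σ
    rcases le_or_gt σ 0 with hσ | hσ
    · have hz : ∀ v, G v σ = 0 := by
        intro v
        apply Set.indicator_of_notMem
        simp only [mem_Ioc]
        intro h
        exact absurd h.1 (not_lt.mpr hσ)
      simp only [hz, integral_zero]
      rw [Set.indicator_of_notMem]
      simp only [mem_Ioc]
      intro h
      exact absurd h.1 (not_lt.mpr hσ)
    · have hGv : ∀ v, G v σ = (Ici σ).indicator (fun v => f (v - σ) * B σ) v := by
        intro v
        simp only [hGdef, Set.indicator_apply, mem_Ioc, mem_Ici]
        by_cases h : σ ≤ v
        · rw [if_pos ⟨hσ, h⟩, if_pos h]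
        · rw [if_neg (fun hh => h hh.2), if_neg h]
      simp only [hGv]
      rw [integral_indicator measurableSet_Ici, Measure.restrict_restrict measurableSet_Ici]
      rcases le_or_gt σ T with hσT | hσT
      · have hset : Ici σ ∩ Ioc (0:ℝ) T = Icc σ T := by
          ext v
          simp only [mem_inter_iff, mem_Ici, mem_Ioc, mem_Icc]
          constructor
          · rintro ⟨h1, _, h3⟩; exact ⟨h1, h3⟩
          · rintro ⟨h1, h2⟩; exact ⟨h1, lt_of_lt_of_le hσ h1, h2⟩
        rw [hset, integral_Icc_eq_integral_Ioc, ← intervalIntegral.integral_of_le hσT,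
          intervalIntegral.integral_mul_const, intervalIntegral.integral_comp_sub_right _ σ,
          sub_self, Set.indicator_of_mem (mem_Ioc.mpr ⟨hσ, hσT⟩)]
      · have hset : Ici σ ∩ Ioc (0:ℝ) T = (∅ : Set ℝ) := by
          ext v
          simp only [mem_inter_iff, mem_Ici, mem_Ioc, mem_empty_iff_false, iff_false, not_and]
          intro h1 h2
          linarith
        rw [hset, Set.indicator_of_notMem]
        · simp
        · simp only [mem_Ioc]
          intro h
          linarith [h.2]
  rw [step1, step2]
  simp only [step3]
  rw [integral_indicator measurableSet_Ioc, ← intervalIntegral.integral_of_le hT]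

/-- Variation of constants: representation of the difference of two solutions. -/
lemma voc (hx1 : IsXSol τ₁ x₁) (hx2 : IsXSol τ₂ x₂) (hτ1 : 0 < τ₁) (hτ12 : τ₁ ≤ τ₂)
    {t : ℝ} (ht : 0 ≤ t) :
    x₁ t - x₂ t = ∫ s in (0:ℝ)..t, x₁ (t - s - τ₁) * (x₂ (s - τ₂) - x₂ (s - τ₁)) := by
  set B : ℝ → ℝ := fun s => x₂ (s - τ₂) - x₂ (s - τ₁) with hBdef
  set f : ℝ → ℝ := fun r => x₁ (r - τ₁) with hfdef
  have hBc : Continuous B := (contD hx2).sub (hx2.1.comp (continuous_sub_right τ₁))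
  have hfc : Continuous f := hx1.1.comp (continuous_sub_right τ₁)
  set u : ℝ → ℝ := fun v => ∫ s in (0:ℝ)..v, f (v - s) * B s with hudef
  have hB0 : ∀ s, s ≤ τ₁ → B s = 0 := by
    intro s hs
    show x₂ (s - τ₂) - x₂ (s - τ₁) = 0
    rw [hx2.2.1 _ (by linarith : s - τ₂ ≤ 0), hx2.2.1 _ (by linarith : s - τ₁ ≤ 0)]
    ring
  have hucont : Continuous u := by
    rw [hudef]
    exact intervalIntegral.continuous_parametric_intervalIntegral_of_continuous
      (by fun_prop : Continuous (Function.uncurry fun (v s : ℝ) => f (v - s) * B s))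
      continuous_id
  have hu0 : ∀ v, v ≤ 0 → u v = 0 := by
    intro v hv
    show (∫ s in (0:ℝ)..v, f (v - s) * B s) = 0
    have : ∀ s ∈ uIcc (0:ℝ) v, f (v - s) * B s = (0:ℝ) := by
      intro s hs
      rw [uIcc_of_ge hv] at hs
      rw [hB0 s (by linarith [hs.2])]
      ring
    rw [intervalIntegral.integral_congr this]
    simp
  -- interval integrability helpers
  have hBint : ∀ a b : ℝ, IntervalIntegrable B volume a b := fun a b => hBc.intervalIntegrable a b
  have hushift : Continuous fun s => u (s - τ₁) := hucont.comp (continuous_sub_right τ₁)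
  have hE : Continuous fun s => x₁ (s - τ₁) - x₂ (s - τ₁) :=
    (hx1.1.comp (continuous_sub_right τ₁)).sub (hx2.1.comp (continuous_sub_right τ₁))
  -- the integral equation satisfied by u
  have hueq : ∀ r, 0 ≤ r → u r = (∫ s in (0:ℝ)..r, B s) - ∫ s in (0:ℝ)..r, u (s - τ₁) := by
    intro r hr
    rcases le_or_gt r τ₁ with hcase | hcase
    · have h1 : u r = 0 := by
        show (∫ s in (0:ℝ)..r, f (r - s) * B s) = 0
        have : ∀ s ∈ uIcc (0:ℝ) r, f (r - s) * B s = (0:ℝ) := by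
          intro s hs
          rw [uIcc_of_le hr] at hs
          rw [hB0 s (by linarith [hs.2])]
          ring
        rw [intervalIntegral.integral_congr this]; simp
      have h2 : (∫ s in (0:ℝ)..r, B s) = 0 := by
        have : ∀ s ∈ uIcc (0:ℝ) r, B s = (0:ℝ) := by
          intro s hs
          rw [uIcc_of_le hr] at hs
          exact hB0 s (by linarith [hs.2])
        rw [intervalIntegral.integral_congr this]; simp
      have h3 : (∫ s in (0:ℝ)..r, u (s - τ₁)) = 0 := by
        have : ∀ s ∈ uIcc (0:ℝ) r, u (s - τ₁) = (0:ℝ) := by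
          intro s hs
          rw [uIcc_of_le hr] at hs
          exact hu0 _ (by linarith [hs.2])
        rw [intervalIntegral.integral_congr this]; simp
      rw [h1, h2, h3]; ring
    · set T := r - τ₁ with hTdef
      have hT0 : 0 ≤ T := by rw [hTdef]; linarith
      -- the shifted integral of u
      have h1 : (∫ s in (0:ℝ)..r, u (s - τ₁)) = ∫ v in (0:ℝ)..T, u v := by
        rw [intervalIntegral.integral_comp_sub_right u τ₁, zero_sub, ← hTdef]
        rw [← intervalIntegral.integral_add_adjacent_intervals
          (hucont.intervalIntegrable (-τ₁) 0) (hucont.intervalIntegrable 0 T)]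
        have hz : (∫ v in (-τ₁)..(0:ℝ), u v) = 0 := by
          have : ∀ v ∈ uIcc (-τ₁) (0:ℝ), u v = (0:ℝ) := by
            intro v hv
            rw [uIcc_of_le (by linarith : -τ₁ ≤ (0:ℝ))] at hv
            exact hu0 _ hv.2
          rw [intervalIntegral.integral_congr this]; simp
        rw [hz, zero_add]
      -- Fubini
      have h3 : (∫ v in (0:ℝ)..T, u v)
          = ∫ σ in (0:ℝ)..T, (∫ w in (0:ℝ)..(T - σ), f w) * B σ := by
        rw [hudef]
        exact triangle_swap f B hfc hBc hT0
      -- split u r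
      have hfBc : Continuous fun σ => f (r - σ) * B σ :=
        (hfc.comp (continuous_const.sub continuous_id')).mul hBc
      have h4 : u r = (∫ σ in (0:ℝ)..T, f (r - σ) * B σ) + ∫ σ in T..r, f (r - σ) * B σ := by
        show (∫ s in (0:ℝ)..r, f (r - s) * B s) = _
        exact (intervalIntegral.integral_add_adjacent_intervals
          (hfBc.intervalIntegrable 0 T) (hfBc.intervalIntegrable T r)).symm
      have h5 : (∫ σ in T..r, f (r - σ) * B σ) = ∫ σ in T..r, B σ := by
        apply intervalIntegral.integral_congr
        intro σ hσ
        rw [uIcc_of_le (by rw [hTdef]; linarith : T ≤ r)] at hσ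
        show x₁ (r - σ - τ₁) * B σ = B σ
        have hle : r - σ - τ₁ ≤ 0 := by
          have := hσ.1
          rw [hTdef] at this
          linarith
        rw [hx1.2.1 _ hle]
        ring
      have h6 : (∫ σ in (0:ℝ)..T, f (r - σ) * B σ)
          = ∫ σ in (0:ℝ)..T, (1 - ∫ w in (0:ℝ)..(T - σ), f w) * B σ := by
        apply intervalIntegral.integral_congr
        intro σ hσ
        rw [uIcc_of_le hT0] at hσ
        have harg : r - σ - τ₁ = T - σ := by rw [hTdef]; ring
        have := hx1.2.2 (T - σ) (by linarith [hσ.2])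
        rw [hfdef]
        show x₁ (r - σ - τ₁) * B σ = _
        rw [harg, this]
      have h7 : (∫ σ in (0:ℝ)..T, (1 - ∫ w in (0:ℝ)..(T - σ), f w) * B σ)
          = (∫ σ in (0:ℝ)..T, B σ) - ∫ σ in (0:ℝ)..T, (∫ w in (0:ℝ)..(T - σ), f w) * B σ := by
        have hc : Continuous fun σ => (∫ w in (0:ℝ)..(T - σ), f w) * B σ := by
          apply Continuous.mul _ hBc
          exact intervalIntegral.continuous_parametric_intervalIntegral_of_continuous
            (by fun_prop : Continuous (Function.uncurry fun (σ w : ℝ) => f w))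
            (by fun_prop : Continuous fun σ : ℝ => T - σ)
        rw [← intervalIntegral.integral_sub (hBint 0 T) (hc.intervalIntegrable 0 T)]
        apply intervalIntegral.integral_congr
        intro σ _
        ring
      have h8 : (∫ σ in (0:ℝ)..T, B σ) + (∫ σ in T..r, B σ) = ∫ σ in (0:ℝ)..r, B σ :=
        intervalIntegral.integral_add_adjacent_intervals (hBint 0 T) (hBint T r)
      rw [h4, h5, h6, h7, h1, h3]
      linarith
  -- the integral equation satisfied by E := x₁ - x₂
  have hEeq : ∀ r, 0 ≤ r → x₁ r - x₂ r
      = (∫ s in (0:ℝ)..r, B s) - ∫ s in (0:ℝ)..r, (x₁ (s - τ₁) - x₂ (s - τ₁)) := by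
    intro r hr
    have e1 := hx1.2.2 r hr
    have e2 := hx2.2.2 r hr
    have hc21 : Continuous fun s => x₂ (s - τ₁) := hx2.1.comp (continuous_sub_right τ₁)
    have hc11 : Continuous fun s => x₁ (s - τ₁) := hx1.1.comp (continuous_sub_right τ₁)
    have i1 : (∫ s in (0:ℝ)..r, B s)
        = (∫ s in (0:ℝ)..r, x₂ (s - τ₂)) - ∫ s in (0:ℝ)..r, x₂ (s - τ₁) :=
      intervalIntegral.integral_sub (intInt hx2 0 r) (hc21.intervalIntegrable 0 r)
    have i2 : (∫ s in (0:ℝ)..r, (x₁ (s - τ₁) - x₂ (s - τ₁)))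
        = (∫ s in (0:ℝ)..r, x₁ (s - τ₁)) - ∫ s in (0:ℝ)..r, x₂ (s - τ₁) :=
      intervalIntegral.integral_sub (hc11.intervalIntegrable 0 r) (hc21.intervalIntegrable 0 r)
    rw [e1, e2, i1, i2]
    ring
  -- stepping: E = u
  have main : ∀ n : ℕ, ∀ r, r ≤ (n : ℝ) * τ₁ → x₁ r - x₂ r = u r := by
    intro n
    induction n with
    | zero =>
      intro r hr
      simp only [Nat.cast_zero, zero_mul] at hr
      rw [hx1.2.1 r hr, hx2.2.1 r hr, hu0 r hr]
      ring
    | succ n ih =>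
      intro r hr
      rcases le_or_gt r 0 with h | h
      · rw [hx1.2.1 r h, hx2.2.1 r h, hu0 r h]; ring
      · have hEr := hEeq r h.le
        have hur := hueq r h.le
        have hz : (∫ s in (0:ℝ)..r, (x₁ (s - τ₁) - x₂ (s - τ₁)))
            = ∫ s in (0:ℝ)..r, u (s - τ₁) := by
          apply intervalIntegral.integral_congr
          intro s hs
          rw [uIcc_of_le h.le] at hs
          apply ih
          push_cast at hr ⊢
          linarith [hs.2]
        rw [hEr, hz, ← hur]
  obtain ⟨n, hn⟩ := exists_nat_ge (t / τ₁)
  have : t ≤ (n : ℝ) * τ₁ := by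
    rw [div_le_iff₀ hτ1] at hn
    linarith
  exact main n t this

/-- Strict monotonicity of the first root in the delay. -/
lemma firstRoot_strict_lt (hτ1e : 1 / Real.exp 1 < τ₁) (h12 : τ₁ < τ₂) (hτ21 : τ₂ ≤ 1)
    (hx1 : IsXSol τ₁ x₁) (hx2 : IsXSol τ₂ x₂) : firstRoot x₂ < firstRoot x₁ := by
  have hτ2e : 1 / Real.exp 1 < τ₂ := lt_trans hτ1e h12
  have hτ1pos : 0 < τ₁ := lt_trans (by positivity) hτ1e
  have hτ2pos : 0 < τ₂ := lt_trans (by positivity) hτ2e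
  obtain ⟨hρ₁pos, hρ₁z, _⟩ := firstRoot_mem hτ1e hx1
  obtain ⟨hρ₂pos, hρ₂z, _⟩ := firstRoot_mem hτ2e hx2
  have hτ₁1 : τ₁ < 1 := lt_of_lt_of_le h12 hτ21
  have hρ₁1 : 1 < firstRoot x₁ := firstRoot_gt_one hτ1e hx1 hτ₁1
  by_contra hcon
  push_neg at hcon
  -- hcon : firstRoot x₁ ≤ firstRoot x₂
  set ρ₁ := firstRoot x₁ with hρ₁def
  have hid := voc hx1 hx2 hτ1pos h12.le (by linarith : (0:ℝ) ≤ ρ₁)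
  set g : ℝ → ℝ := fun s => x₁ (ρ₁ - s - τ₁) * (x₂ (s - τ₂) - x₂ (s - τ₁)) with hgdef
  have hgc : Continuous g := by
    apply Continuous.mul
    · exact hx1.1.comp ((continuous_const.sub continuous_id').sub continuous_const)
    · exact (contD hx2).sub (hx2.1.comp (continuous_sub_right τ₁))
  set b := min ρ₁ τ₂ with hbdef
  have hτ₁b : τ₁ < b := lt_min (by linarith) h12
  have hbρ₁ : b ≤ ρ₁ := min_le_left _ _
  have hbτ₂ : b ≤ τ₂ := min_le_right _ _
  have hW : ∀ s, 0 ≤ s → s ≤ ρ₁ → 0 < x₁ (ρ₁ - s - τ₁) := by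
    intro s hs0 _
    exact pos_of_lt_firstRoot hτ1e hx1 (by rw [← hρ₁def]; linarith)
  have hB : ∀ s, 0 ≤ s → s ≤ ρ₁ → 0 ≤ x₂ (s - τ₂) - x₂ (s - τ₁) := by
    intro s _ hs1
    have := le_of_le_rho hτ2e hx2 (by linarith : s - τ₂ ≤ s - τ₁)
      (by linarith : s - τ₁ ≤ firstRoot x₂)
    linarith
  have hgnn : ∀ s, 0 ≤ s → s ≤ ρ₁ → 0 ≤ g s := by
    intro s h0 h1
    exact mul_nonneg (hW s h0 h1).le (hB s h0 h1)
  have hx20 : x₂ 0 = 1 := by simpa using hx2.2.2 0 le_rfl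
  have hBpos : ∀ s ∈ Ioo τ₁ b, 0 < g s := by
    intro s hs
    apply mul_pos (hW s (by linarith [hs.1]) (by linarith [hs.2]))
    have h1 : x₂ (s - τ₂) = 1 := hx2.2.1 _ (by linarith [hs.2] : s - τ₂ ≤ 0)
    have h2 : x₂ (s - τ₁) < 1 := by
      have hmem1 : (0:ℝ) ∈ Icc (0:ℝ) (firstRoot x₂ + τ₂) := ⟨le_rfl, by linarith⟩
      have hmem2 : s - τ₁ ∈ Icc (0:ℝ) (firstRoot x₂ + τ₂) :=
        ⟨by linarith [hs.1], by linarith [hs.2]⟩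
      have := strictAntiOn_upto hτ2e hx2 hmem1 hmem2 (by linarith [hs.1])
      rwa [hx20] at this
    linarith
  -- positivity of the whole integral
  have hsplit : (∫ s in (0:ℝ)..ρ₁, g s)
      = ((∫ s in (0:ℝ)..τ₁, g s) + ∫ s in τ₁..b, g s) + ∫ s in b..ρ₁, g s := by
    rw [intervalIntegral.integral_add_adjacent_intervals (hgc.intervalIntegrable 0 τ₁)
      (hgc.intervalIntegrable τ₁ b),
      intervalIntegral.integral_add_adjacent_intervals (hgc.intervalIntegrable 0 b)
      (hgc.intervalIntegrable b ρ₁)]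
  have hI1 : 0 ≤ ∫ s in (0:ℝ)..τ₁, g s := by
    apply intervalIntegral.integral_nonneg hτ1pos.le
    intro s hs
    exact hgnn s hs.1 (by linarith [hs.2])
  have hI2 : 0 < ∫ s in τ₁..b, g s :=
    intervalIntegral.intervalIntegral_pos_of_pos_on (hgc.intervalIntegrable τ₁ b) hBpos hτ₁b
  have hI3 : 0 ≤ ∫ s in b..ρ₁, g s := by
    apply intervalIntegral.integral_nonneg hbρ₁
    intro s hs
    exact hgnn s (by linarith [hs.1]) hs.2
  have hpos : 0 < ∫ s in (0:ℝ)..ρ₁, g s := by rw [hsplit]; linarith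
  have hx2ρ₁ : x₂ ρ₁ < 0 := by linarith [hid, hpos, hρ₁z]
  rcases eq_or_lt_of_le hcon with heq | hlt
  · rw [← heq] at hρ₂z
    linarith
  · have := pos_of_lt_firstRoot hτ2e hx2 hlt
    linarith
end XWork


theorem stmt0
    (X : ℝ → ℝ → ℝ) (hX : ∀ τ > 1 / Real.exp 1, IsXSol τ (X τ))
    (ϱ : ℝ → ℝ) (hϱ : ∀ τ, ϱ τ = firstRoot (X τ)) :
    (∀ τ > 1 / Real.exp 1,
      (∃ t > (0:ℝ), X τ t = 0) ∧
      X τ 0 = 1 ∧ X τ (ϱ τ) = 0 ∧ 0 < ϱ τ ∧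
      StrictAntiOn (X τ) (Icc 0 (ϱ τ))) ∧
    ContinuousOn ϱ (Ioi (1 / Real.exp 1)) ∧
    StrictAntiOn ϱ (Ioc (1 / Real.exp 1) 1) ∧
    (∀ τ ≥ (1:ℝ), ϱ τ = 1) := by
  refine ⟨?_, ?_, ?_, ?_⟩
  · intro τ hτ
    have hx := hX τ hτ
    have hτpos : 0 < τ := lt_trans (by positivity) hτ
    obtain ⟨hp, hz, _⟩ := XWork.firstRoot_mem hτ hx
    refine ⟨XWork.exists_root hτ hx, by simpa using hx.2.2 0 le_rfl,
      by rw [hϱ]; exact hz, by rw [hϱ]; exact hp, ?_⟩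
    rw [hϱ]
    exact (XWork.strictAntiOn_upto hτ hx).mono
      (Icc_subset_Icc_right (by linarith : firstRoot (X τ) ≤ firstRoot (X τ) + τ))
  · have heq : ϱ = fun τ => firstRoot (X τ) := funext hϱ
    rw [heq]
    intro τ₀ hτ₀
    exact (XWork.firstRoot_continuousAt X hX hτ₀).continuousWithinAt
  · intro τ₁ h1 τ₂ h2 h12
    rw [hϱ, hϱ]
    exact XWork.firstRoot_strict_lt h1.1 h12 h2.2 (hX τ₁ h1.1) (hX τ₂ h2.1)
  · intro τ hτ1
    have h1e : (1:ℝ) < Real.exp 1 := by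
      have := Real.add_one_le_exp 1
      linarith
    have hτe : 1 / Real.exp 1 < τ :=
      lt_of_lt_of_le ((div_lt_one (Real.exp_pos 1)).mpr h1e) hτ1
    rw [hϱ]
    exact XWork.firstRoot_eq_one hτe (hX τ hτe) hτ1
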